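/- Let T : 𝕏 × 𝕏 × 𝕐 → 𝕐 be jointly Borel-measurable and let ((X_i, Y_i))_{i≥1} be an i.i.d. sequence with law μ on a probability space (Ω, ℙ). Define the V-statistic ℓ_n^V(T) := −(2/n²) Σ_{i=1}^n Σ_{j=1}^n k(Y_i, T(X_i, X_j, Y_j)) + (1/n³) Σ_{i=1}^n Σ_{j=1}^n Σ_{l=1}^n k(T(X_i, X_j, Y_j), T(X_i, X_l, Y_l)). Then, with c := −∫ ‖ψ(y)‖²_H dμ(x,y), for every ε > 0 there exists M > 0 such that for all n ≥ 1, ℙ( |ℓ_n^V(T) − ℓ(T) − c| > M·n^{−1/2} ) ≤ ε. -/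

import Mathlib

open MeasureTheory ProbabilityTheory RealInnerProductSpace

noncomputable section

set_option linter.unusedSectionVars false
section AuxGeneric

section Generic

variable {E : Type*} [MeasurableSpace E] {μ : Measure E} [IsProbabilityMeasure μ]
variable {Ω : Type*} [MeasurableSpace Ω] {P : Measure Ω} [IsProbabilityMeasure P]
variable {Z : ℕ → Ω → E}

/-- Law of an injective tuple of iid random variables is the product measure. -/
theorem map_tuple_eq_pi (hmeas : ∀ i, Measurable (Z i))
    (hind : iIndepFun Z P) (hlaw : ∀ i, P.map (Z i) = μ)
    {m : ℕ} {t : Fin m → ℕ} (ht : Function.Injective t) :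
    P.map (fun ω (r : Fin m) => Z (t r) ω) = Measure.pi (fun _ : Fin m => μ) := by
  classical
  have hmt : Measurable (fun ω (r : Fin m) => Z (t r) ω) :=
    measurable_pi_lambda _ fun r => hmeas (t r)
  refine (Measure.pi_eq fun s hs => ?_).symm
  rw [Measure.map_apply hmt (MeasurableSet.univ_pi hs)]
  have hpre : (fun ω (r : Fin m) => Z (t r) ω) ⁻¹' (Set.pi Set.univ s)
      = ⋂ r : Fin m, Z (t r) ⁻¹' s r := by
    ext ω; simp [Set.mem_pi]
  rw [hpre]
  -- define sets on ℕ
  set sets : ℕ → Set E := fun i => if h : ∃ r, t r = i then s h.choose else Set.univ with hsets_def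
  have hsets : ∀ r, sets (t r) = s r := by
    intro r
    have h : ∃ r', t r' = t r := ⟨r, rfl⟩
    simp only [hsets_def, dif_pos h]
    exact congrArg s (ht h.choose_spec)
  have hmeas_sets : ∀ i, MeasurableSet (sets i) := by
    intro i
    by_cases h : ∃ r, t r = i
    · simp only [hsets_def, dif_pos h]; exact hs _
    · simp only [hsets_def, dif_neg h]; exact MeasurableSet.univ
  have key := hind.measure_inter_preimage_eq_mul (Finset.image t Finset.univ)
    (sets := sets) (fun i _ => hmeas_sets i)
  have hinter : (⋂ i ∈ Finset.image t Finset.univ, Z i ⁻¹' sets i)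
      = ⋂ r : Fin m, Z (t r) ⁻¹' s r := by
    ext ω
    simp only [Set.mem_iInter, Finset.mem_image, Finset.mem_univ, true_and, Set.mem_preimage]
    constructor
    · intro h r; have := h (t r) ⟨r, rfl⟩; rwa [hsets r] at this
    · rintro h i ⟨r, rfl⟩; rw [hsets r]; exact h r
  have hprod : (∏ i ∈ Finset.image t Finset.univ, P (Z i ⁻¹' sets i))
      = ∏ r : Fin m, μ (s r) := by
    rw [Finset.prod_image (fun a _ b _ h => ht h)]
    refine Finset.prod_congr rfl fun r _ => ?_
    rw [hsets r, ← hlaw (t r), Measure.map_apply (hmeas (t r)) (hs r)]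
  rw [hinter, hprod] at key
  exact key

/-- Counting: pairs of tuples with a collision are few. -/
theorem card_bad_le (m n : ℕ) :
    ((( Fintype.piFinset fun _ : Fin m => Finset.range n) ×ˢ
        (Fintype.piFinset fun _ : Fin m => Finset.range n)).filter
      (fun p : (Fin m → ℕ) × (Fin m → ℕ) =>
        ¬ Function.Injective (Sum.elim p.1 p.2))).card
      ≤ 4 * m ^ 2 * n ^ (2 * m - 1) := by
  classical
  set Pn : Finset (Fin m → ℕ) := Fintype.piFinset fun _ : Fin m => Finset.range n with hPn
  set pairs : Finset ((Fin m ⊕ Fin m) × (Fin m ⊕ Fin m)) :=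
    Finset.univ.filter (fun q => q.1 ≠ q.2) with hpairs
  have hsubset : ((Pn ×ˢ Pn).filter
      (fun p : (Fin m → ℕ) × (Fin m → ℕ) => ¬ Function.Injective (Sum.elim p.1 p.2)))
      ⊆ pairs.biUnion (fun q => (Pn ×ˢ Pn).filter
        (fun p => Sum.elim p.1 p.2 q.1 = Sum.elim p.1 p.2 q.2)) := by
    intro p hp
    rw [Finset.mem_filter] at hp
    obtain ⟨hpmem, hpnotinj⟩ := hp
    rw [Function.not_injective_iff] at hpnotinj
    obtain ⟨a, b, hab, hne⟩ := hpnotinj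
    refine Finset.mem_biUnion.2 ⟨(a, b), ?_, ?_⟩
    · simp [hpairs, hne]
    · exact Finset.mem_filter.2 ⟨hpmem, hab⟩
  refine le_trans (Finset.card_le_card hsubset) ?_
  refine le_trans (Finset.card_biUnion_le) ?_
  have hcard_each : ∀ q ∈ pairs, ((Pn ×ˢ Pn).filter
      (fun p => Sum.elim p.1 p.2 q.1 = Sum.elim p.1 p.2 q.2)).card ≤ n ^ (2 * m - 1) := by
    intro q hq
    have hqne : q.1 ≠ q.2 := by simpa [hpairs] using hq
    set tgt : Finset (Fin m ⊕ Fin m → ℕ) :=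
      Fintype.piFinset (fun c => if c = q.2 then ({0} : Finset ℕ) else Finset.range n) with htgt
    have hinj : ∀ p ∈ ((Pn ×ˢ Pn).filter
        (fun p => Sum.elim p.1 p.2 q.1 = Sum.elim p.1 p.2 q.2)),
        Function.update (Sum.elim p.1 p.2) q.2 0 ∈ tgt := by
      intro p hp
      rw [Finset.mem_filter, Finset.mem_product] at hp
      rw [htgt, Fintype.mem_piFinset]
      intro c
      by_cases hc : c = q.2
      · subst hc; simp
      · rw [Function.update_of_ne hc, if_neg hc]
        rcases c with r | r
        · simpa using (Fintype.mem_piFinset.1 hp.1.1) r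
        · simpa using (Fintype.mem_piFinset.1 hp.1.2) r
    have hinjOn : Set.InjOn (fun p : (Fin m → ℕ) × (Fin m → ℕ) =>
        Function.update (Sum.elim p.1 p.2) q.2 0)
        ((Pn ×ˢ Pn).filter (fun p => Sum.elim p.1 p.2 q.1 = Sum.elim p.1 p.2 q.2)) := by
      intro p hp p' hp' heq
      rw [Finset.mem_coe, Finset.mem_filter] at hp hp'
      have hw : Sum.elim p.1 p.2 = Sum.elim p'.1 p'.2 := by
        funext c
        by_cases hc : c = q.2
        · subst hc
          have h1 : Sum.elim p.1 p.2 q.2 = Sum.elim p.1 p.2 q.1 := hp.2.symm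
          have h2 : Sum.elim p'.1 p'.2 q.2 = Sum.elim p'.1 p'.2 q.1 := hp'.2.symm
          rw [h1, h2]
          have := congrFun heq q.1
          simpa [Function.update_of_ne hqne] using this
        · have := congrFun heq c
          simpa [Function.update_of_ne hc] using this
      have h1 : p.1 = p'.1 := by funext r; exact congrFun hw (Sum.inl r)
      have h2 : p.2 = p'.2 := by funext r; exact congrFun hw (Sum.inr r)
      exact Prod.ext h1 h2
    have hle := Finset.card_le_card_of_injOn _ hinj hinjOn
    refine le_trans hle ?_
    rw [htgt, Fintype.card_piFinset]
    have : (∏ c : Fin m ⊕ Fin m, (if c = q.2 then ({0} : Finset ℕ) else Finset.range n).card)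
        = n ^ (2 * m - 1) := by
      rw [← Finset.mul_prod_erase Finset.univ _ (Finset.mem_univ q.2)]
      rw [if_pos rfl]
      simp only [Finset.card_singleton, one_mul]
      have hconst : ∀ c ∈ Finset.univ.erase q.2,
          (if c = q.2 then ({0} : Finset ℕ) else Finset.range n).card = n := by
        intro c hc
        rw [if_neg (Finset.ne_of_mem_erase hc), Finset.card_range]
      rw [Finset.prod_congr rfl hconst, Finset.prod_const]
      congr 1
      rw [Finset.card_erase_of_mem (Finset.mem_univ _), Finset.card_univ]
      simp [Fintype.card_sum, two_mul]
    rw [this]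
  refine le_trans (Finset.sum_le_sum hcard_each) ?_
  rw [Finset.sum_const, smul_eq_mul]
  have hcard_pairs : pairs.card ≤ 4 * m ^ 2 := by
    refine le_trans (Finset.card_filter_le _ _) ?_
    rw [Finset.card_univ, Fintype.card_prod, Fintype.card_sum, Fintype.card_fin]
    ring_nf
    omega
  exact Nat.mul_le_mul_right _ hcard_pairs

theorem vstat_sq_integral_le (hmeas : ∀ i, Measurable (Z i))
    (hind : iIndepFun Z P) (hlaw : ∀ i, P.map (Z i) = μ)
    {m : ℕ} {F : (Fin m → E) → ℝ} (hF : Measurable F) {B : ℝ} (hB : ∀ v, |F v| ≤ B)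
    (n : ℕ) :
    ∫ ω, (∑ t ∈ Fintype.piFinset (fun _ : Fin m => Finset.range n),
        (F (fun r => Z (t r) ω) - ∫ v, F v ∂(Measure.pi fun _ : Fin m => μ))) ^ 2 ∂P
      ≤ 16 * m ^ 2 * B ^ 2 * n ^ (2 * m - 1) := by
  classical
  have hE : Nonempty E := by
    by_contra h
    rw [not_nonempty_iff] at h
    have h1 := measure_univ (μ := μ)
    rw [Set.univ_eq_empty_iff.mpr h] at h1
    simp at h1
  have hB0 : 0 ≤ B := le_trans (abs_nonneg _) (hB (fun _ => Classical.arbitrary E))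
  set Θ : ℝ := ∫ v, F v ∂(Measure.pi fun _ : Fin m => μ) with hΘ
  set g : (Fin m → ℕ) → Ω → ℝ := fun t ω => F (fun r => Z (t r) ω) - Θ with hg
  have htuple_meas : ∀ t : Fin m → ℕ, Measurable (fun ω (r : Fin m) => Z (t r) ω) :=
    fun t => measurable_pi_lambda _ fun r => hmeas (t r)
  have hgmeas : ∀ t, Measurable (g t) := fun t =>
    ((hF.comp (htuple_meas t)).sub measurable_const)
  have hΘabs : |Θ| ≤ B := by
    rw [hΘ, ← Real.norm_eq_abs]
    refine le_trans (norm_integral_le_integral_norm _) ?_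
    simp only [Real.norm_eq_abs]
    calc ∫ v, |F v| ∂(Measure.pi fun _ : Fin m => μ)
        ≤ ∫ _, B ∂(Measure.pi fun _ : Fin m => μ) := by
          refine integral_mono_of_nonneg (Filter.Eventually.of_forall fun v => abs_nonneg _)
            (integrable_const B) (Filter.Eventually.of_forall fun v => hB v)
      _ = B := by simp
  have hgbdd : ∀ t ω, |g t ω| ≤ 2 * B := by
    intro t ω
    calc |g t ω| ≤ |F (fun r => Z (t r) ω)| + |Θ| := abs_sub _ _
      _ ≤ B + B := add_le_add (hB _) hΘabs
      _ = 2 * B := by ring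
  have hgint : ∀ t, Integrable (g t) P := by
    intro t
    refine (integrable_const (2 * B)).mono' (hgmeas t).aestronglyMeasurable ?_
    filter_upwards with ω
    simpa [Real.norm_eq_abs] using hgbdd t ω
  have hmulbdd : ∀ t t' ω, |g t ω * g t' ω| ≤ 4 * B ^ 2 := by
    intro t t' ω
    rw [abs_mul]
    calc |g t ω| * |g t' ω| ≤ (2 * B) * (2 * B) :=
        mul_le_mul (hgbdd t ω) (hgbdd t' ω) (abs_nonneg _) (by linarith)
      _ = 4 * B ^ 2 := by ring
  have hmulint : ∀ t t', Integrable (fun ω => g t ω * g t' ω) P := by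
    intro t t'
    refine (integrable_const (4 * B ^ 2)).mono'
      ((hgmeas t).mul (hgmeas t')).aestronglyMeasurable ?_
    filter_upwards with ω
    simpa [Real.norm_eq_abs, abs_mul] using hmulbdd t t' ω
  -- mean zero for injective tuples
  have hmean : ∀ t : Fin m → ℕ, Function.Injective t → ∫ ω, g t ω ∂P = 0 := by
    intro t ht
    have hFt : Integrable (fun ω => F (fun r => Z (t r) ω)) P := by
      refine (integrable_const B).mono' (hF.comp (htuple_meas t)).aestronglyMeasurable ?_
      filter_upwards with ω
      simpa [Real.norm_eq_abs] using hB _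
    rw [hg]
    rw [integral_sub hFt (integrable_const Θ), integral_const]
    simp only [probReal_univ, one_smul]
    have : ∫ ω, F (fun r => Z (t r) ω) ∂P = Θ := by
      rw [hΘ, ← map_tuple_eq_pi hmeas hind hlaw ht,
        integral_map (htuple_meas t).aemeasurable hF.aestronglyMeasurable]
    rw [this, sub_self]
  -- zero covariance for disjoint injective tuples
  have hzero : ∀ t t' : Fin m → ℕ, Function.Injective t → Function.Injective t' →
      (∀ r r', t r ≠ t' r') → ∫ ω, g t ω * g t' ω ∂P = 0 := by
    intro t t' ht ht' hdisj
    set S : Finset ℕ := Finset.image t Finset.univ with hS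
    set T' : Finset ℕ := Finset.image t' Finset.univ with hT'
    have hST : Disjoint S T' := by
      rw [Finset.disjoint_left]
      rintro i hi hi'
      rw [hS, Finset.mem_image] at hi
      rw [hT', Finset.mem_image] at hi'
      obtain ⟨r, -, rfl⟩ := hi
      obtain ⟨r', -, h⟩ := hi'
      exact hdisj r r' h.symm
    have base := hind.indepFun_finset S T' hST hmeas
    set φS : ((i : S) → E) → ℝ :=
      fun v => F (fun r => v ⟨t r, by rw [hS]; exact Finset.mem_image_of_mem t (Finset.mem_univ r)⟩) - Θ with hφS
    set φT : ((i : T') → E) → ℝ :=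
      fun v => F (fun r => v ⟨t' r, by rw [hT']; exact Finset.mem_image_of_mem t' (Finset.mem_univ r)⟩) - Θ with hφT
    have hφSm : Measurable φS :=
      (hF.comp (measurable_pi_lambda _ fun r => measurable_pi_apply _)).sub measurable_const
    have hφTm : Measurable φT :=
      (hF.comp (measurable_pi_lambda _ fun r => measurable_pi_apply _)).sub measurable_const
    have hindep : IndepFun (g t) (g t') P := base.comp hφSm hφTm
    rw [show (fun ω => g t ω * g t' ω) = g t * g t' from rfl]
    rw [IndepFun.integral_mul_eq_mul_integral hindep (hgmeas t).aestronglyMeasurable (hgmeas t').aestronglyMeasurable]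
    rw [hmean t ht, zero_mul]
  -- expand the square
  set Pn : Finset (Fin m → ℕ) := Fintype.piFinset fun _ : Fin m => Finset.range n with hPn
  have hexpand : ∀ ω, (∑ t ∈ Pn, g t ω) ^ 2 = ∑ p ∈ Pn ×ˢ Pn, g p.1 ω * g p.2 ω := by
    intro ω
    rw [sq, Finset.sum_mul_sum, ← Finset.sum_product']
  have hstep : ∫ ω, (∑ t ∈ Pn, g t ω) ^ 2 ∂P = ∑ p ∈ Pn ×ˢ Pn, ∫ ω, g p.1 ω * g p.2 ω ∂P := by
    rw [integral_congr_ae (Filter.Eventually.of_forall hexpand)]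
    exact integral_finset_sum _ fun p _ => hmulint p.1 p.2
  rw [hstep]
  -- split into good and bad pairs
  set Bad : Finset ((Fin m → ℕ) × (Fin m → ℕ)) :=
    (Pn ×ˢ Pn).filter (fun p => ¬ Function.Injective (Sum.elim p.1 p.2)) with hBad
  have hgood_zero : ∀ p ∈ (Pn ×ˢ Pn).filter
      (fun p : (Fin m → ℕ) × (Fin m → ℕ) => Function.Injective (Sum.elim p.1 p.2)),
      ∫ ω, g p.1 ω * g p.2 ω ∂P = 0 := by
    intro p hp
    rw [Finset.mem_filter] at hp
    have hinj := hp.2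
    refine hzero p.1 p.2 ?_ ?_ ?_
    · intro a b hab
      have : Sum.elim p.1 p.2 (Sum.inl a) = Sum.elim p.1 p.2 (Sum.inl b) := by simpa using hab
      simpa using hinj this
    · intro a b hab
      have : Sum.elim p.1 p.2 (Sum.inr a) = Sum.elim p.1 p.2 (Sum.inr b) := by simpa using hab
      simpa using hinj this
    · intro r r' h
      have : Sum.elim p.1 p.2 (Sum.inl r) = Sum.elim p.1 p.2 (Sum.inr r') := by simpa using h
      simpa using hinj this
  have hsplit : ∑ p ∈ Pn ×ˢ Pn, ∫ ω, g p.1 ω * g p.2 ω ∂P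
      = ∑ p ∈ Bad, ∫ ω, g p.1 ω * g p.2 ω ∂P := by
    rw [← Finset.sum_filter_add_sum_filter_not (Pn ×ˢ Pn)
      (fun p : (Fin m → ℕ) × (Fin m → ℕ) => Function.Injective (Sum.elim p.1 p.2))]
    rw [Finset.sum_eq_zero hgood_zero, zero_add]
  rw [hsplit]
  have hbound_each : ∀ p ∈ Bad, ∫ ω, g p.1 ω * g p.2 ω ∂P ≤ 4 * B ^ 2 := by
    intro p _
    refine le_trans (le_abs_self _) ?_
    rw [← Real.norm_eq_abs]
    refine le_trans (norm_integral_le_integral_norm _) ?_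
    simp only [Real.norm_eq_abs]
    calc ∫ ω, |g p.1 ω * g p.2 ω| ∂P ≤ ∫ _, 4 * B ^ 2 ∂P := by
          refine integral_mono_of_nonneg (Filter.Eventually.of_forall fun ω => abs_nonneg _)
            (integrable_const _) (Filter.Eventually.of_forall fun ω => hmulbdd p.1 p.2 ω)
      _ = 4 * B ^ 2 := by simp
  calc ∑ p ∈ Bad, ∫ ω, g p.1 ω * g p.2 ω ∂P ≤ ∑ _p ∈ Bad, 4 * B ^ 2 :=
        Finset.sum_le_sum hbound_each
    _ = Bad.card * (4 * B ^ 2) := by rw [Finset.sum_const, nsmul_eq_mul]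
    _ ≤ (4 * m ^ 2 * n ^ (2 * m - 1) : ℕ) * (4 * B ^ 2) := by
        refine mul_le_mul_of_nonneg_right ?_ (by positivity)
        exact_mod_cast card_bad_le m n
    _ = 16 * m ^ 2 * B ^ 2 * n ^ (2 * m - 1) := by
        push_cast
        ring

theorem chebyshev_aux {W : Ω → ℝ} (hW : Measurable W)
    (hWint : Integrable (fun ω => W ω ^ 2) P) {a V : ℝ} (ha : 0 < a)
    (hV : ∫ ω, W ω ^ 2 ∂P ≤ V) :
    P {ω | a < |W ω|} ≤ ENNReal.ofReal (V / a ^ 2) := by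
  have hsub : {ω | a < |W ω|} ⊆ {ω | ENNReal.ofReal (a ^ 2) ≤ ENNReal.ofReal (W ω ^ 2)} := by
    intro ω hω
    rw [Set.mem_setOf_eq] at hω ⊢
    refine ENNReal.ofReal_le_ofReal ?_
    calc a ^ 2 ≤ |W ω| ^ 2 := pow_le_pow_left₀ ha.le hω.le 2
      _ = W ω ^ 2 := sq_abs _
  refine le_trans (measure_mono hsub) ?_
  have ha2 : (0 : ℝ) < a ^ 2 := by positivity
  have hmark := meas_ge_le_lintegral_div
    (μ := P) (f := fun ω => ENNReal.ofReal (W ω ^ 2))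
    (ENNReal.measurable_ofReal.comp (hW.pow_const 2)).aemeasurable
    (ε := ENNReal.ofReal (a ^ 2)) (by simp [ha2, ENNReal.ofReal_eq_zero, not_le, ha.ne']) ENNReal.ofReal_ne_top
  refine le_trans hmark ?_
  rw [← ofReal_integral_eq_lintegral_ofReal hWint
    (Filter.Eventually.of_forall fun ω => sq_nonneg _)]
  rw [← ENNReal.ofReal_div_of_pos ha2]
  exact ENNReal.ofReal_le_ofReal (by gcongr)

theorem vstat_chebyshev (hmeas : ∀ i, Measurable (Z i))
    (hind : iIndepFun Z P) (hlaw : ∀ i, P.map (Z i) = μ)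
    {m : ℕ} {F : (Fin m → E) → ℝ} (hF : Measurable F) {B : ℝ} (hB : ∀ v, |F v| ≤ B)
    (n : ℕ) {a : ℝ} (ha : 0 < a) :
    P {ω | a < |∑ t ∈ Fintype.piFinset (fun _ : Fin m => Finset.range n),
        (F (fun r => Z (t r) ω) - ∫ v, F v ∂(Measure.pi fun _ : Fin m => μ))|}
      ≤ ENNReal.ofReal ((16 * m ^ 2 * B ^ 2 * n ^ (2 * m - 1)) / a ^ 2) := by
  classical
  set Θ : ℝ := ∫ v, F v ∂(Measure.pi fun _ : Fin m => μ) with hΘ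
  set W : Ω → ℝ := fun ω => ∑ t ∈ Fintype.piFinset (fun _ : Fin m => Finset.range n),
    (F (fun r => Z (t r) ω) - Θ) with hW
  have hΘabs : |Θ| ≤ B := by
    rw [hΘ, ← Real.norm_eq_abs]
    refine le_trans (norm_integral_le_integral_norm _) ?_
    simp only [Real.norm_eq_abs]
    calc ∫ v, |F v| ∂(Measure.pi fun _ : Fin m => μ)
        ≤ ∫ _, B ∂(Measure.pi fun _ : Fin m => μ) := by
          refine integral_mono_of_nonneg (Filter.Eventually.of_forall fun v => abs_nonneg _)
            (integrable_const B) (Filter.Eventually.of_forall fun v => hB v)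
      _ = B := by simp
  have hWmeas : Measurable W := by
    refine Finset.measurable_sum _ fun t _ => ?_
    exact (hF.comp (measurable_pi_lambda _ fun r => hmeas (t r))).sub measurable_const
  set D : ℝ := ((Fintype.piFinset (fun _ : Fin m => Finset.range n)).card : ℝ) * (2 * B)
    with hD
  have hWbdd : ∀ ω, |W ω| ≤ D := by
    intro ω
    rw [hW]
    refine le_trans (Finset.abs_sum_le_sum_abs _ _) ?_
    calc ∑ t ∈ Fintype.piFinset (fun _ : Fin m => Finset.range n), |F (fun r => Z (t r) ω) - Θ|
        ≤ ∑ _t ∈ Fintype.piFinset (fun _ : Fin m => Finset.range n), (2 * B) := by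
          refine Finset.sum_le_sum fun t _ => ?_
          calc |F (fun r => Z (t r) ω) - Θ| ≤ |F (fun r => Z (t r) ω)| + |Θ| := abs_sub _ _
            _ ≤ B + B := add_le_add (hB _) hΘabs
            _ = 2 * B := by ring
      _ = D := by rw [Finset.sum_const, nsmul_eq_mul, hD]
  have hWsqint : Integrable (fun ω => W ω ^ 2) P := by
    refine (integrable_const (D ^ 2)).mono'
      ((hWmeas.pow_const 2).aestronglyMeasurable) ?_
    filter_upwards with ω
    have habs : ‖W ω ^ 2‖ = |W ω| ^ 2 := by rw [Real.norm_eq_abs, abs_pow]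
    rw [habs]
    exact pow_le_pow_left₀ (abs_nonneg _) (hWbdd ω) 2
  have hvar := vstat_sq_integral_le hmeas hind hlaw hF hB n
  exact chebyshev_aux hWmeas hWsqint ha hvar

end Generic

section SumHelpers

theorem sum_piFinset_two {α : Type*} [AddCommMonoid α] (s : Finset ℕ) (G : (Fin 2 → ℕ) → α) :
    ∑ t ∈ Fintype.piFinset (fun _ : Fin 2 => s), G t
      = ∑ i ∈ s, ∑ j ∈ s, G ![i, j] := by
  rw [← Finset.sum_product']
  refine (Finset.sum_nbij' (fun t => (t 0, t 1)) (fun p => ![p.1, p.2]) ?_ ?_ ?_ ?_ ?_).symm.symm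
  · intro t ht
    rw [Fintype.mem_piFinset] at ht
    exact Finset.mem_product.2 ⟨ht 0, ht 1⟩
  · intro p hp
    rw [Finset.mem_product] at hp
    rw [Fintype.mem_piFinset]
    intro r
    fin_cases r
    · simpa using hp.1
    · simpa using hp.2
  · intro t ht
    funext r
    fin_cases r <;> simp
  · intro p hp
    simp
  · intro t ht
    congr 1
    funext r
    fin_cases r <;> simp

theorem sum_piFinset_three {α : Type*} [AddCommMonoid α] (s : Finset ℕ) (G : (Fin 3 → ℕ) → α) :
    ∑ t ∈ Fintype.piFinset (fun _ : Fin 3 => s), G t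
      = ∑ i ∈ s, ∑ j ∈ s, ∑ l ∈ s, G ![i, j, l] := by
  rw [← Finset.sum_product', ← Finset.sum_product']
  refine (Finset.sum_nbij' (fun t => ((t 0, t 1), t 2)) (fun p => ![p.1.1, p.1.2, p.2]) ?_ ?_ ?_ ?_ ?_).symm.symm
  · intro t ht
    rw [Fintype.mem_piFinset] at ht
    exact Finset.mem_product.2 ⟨Finset.mem_product.2 ⟨ht 0, ht 1⟩, ht 2⟩
  · intro p hp
    rw [Finset.mem_product] at hp
    have hp1 := Finset.mem_product.1 hp.1
    rw [Fintype.mem_piFinset]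
    intro r
    fin_cases r
    · simpa using hp1.1
    · simpa using hp1.2
    · simpa using hp.2
  · intro t ht
    funext r
    fin_cases r <;> simp
  · intro p hp
    simp
  · intro t ht
    congr 1
    funext r
    fin_cases r <;> simp

end SumHelpers

theorem integral_pi_two {E' : Type*} [MeasurableSpace E'] (μ : Measure E')
    [IsProbabilityMeasure μ] {f : (Fin 2 → E') → ℝ} (hf : Measurable f) {B : ℝ}
    (hbdd : ∀ v, |f v| ≤ B) :
    ∫ v, f v ∂(Measure.pi fun _ : Fin 2 => μ) = ∫ z, ∫ w, f ![z, w] ∂μ ∂μ := by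
  set e := MeasurableEquiv.piFinSuccAbove (fun _ : Fin 2 => E') 0 with he
  have h1 : ∫ v, f v ∂(Measure.pi fun _ : Fin 2 => μ)
      = ∫ p, f (e.symm p) ∂(μ.prod (Measure.pi fun _ : Fin 1 => μ)) := by
    rw [← (measurePreserving_piFinSuccAbove (fun _ : Fin 2 => μ) 0).integral_comp'
      (g := fun p => f (e.symm p))]
    refine integral_congr_ae (Filter.Eventually.of_forall fun v => ?_)
    exact congrArg f (e.symm_apply_apply v).symm
  rw [h1]
  have hint : Integrable (fun p => f (e.symm p)) (μ.prod (Measure.pi fun _ : Fin 1 => μ)) := by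
    refine (integrable_const B).mono' (hf.comp e.symm.measurable).aestronglyMeasurable ?_
    filter_upwards with p
    simpa [Real.norm_eq_abs] using hbdd _
  rw [integral_prod _ hint]
  refine integral_congr_ae (Filter.Eventually.of_forall fun z => ?_)
  show (∫ w1, f (e.symm (z, w1)) ∂(Measure.pi fun _ : Fin 1 => μ)) = ∫ w, f ![z, w] ∂μ
  set pu := MeasurableEquiv.piUnique (fun _ : Fin 1 => E') with hpu
  have h2 : ∫ w1, f (e.symm (z, w1)) ∂(Measure.pi fun _ : Fin 1 => μ)
      = ∫ w, f (e.symm (z, pu.symm w)) ∂μ := by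
    rw [← (measurePreserving_piUnique (fun _ : Fin 1 => μ)).integral_comp'
      (g := fun w => f (e.symm (z, pu.symm w)))]
    refine integral_congr_ae (Filter.Eventually.of_forall fun w1 => ?_)
    exact congrArg (fun u => f (e.symm (z, u))) (pu.symm_apply_apply w1).symm
  rw [h2]
  refine integral_congr_ae (Filter.Eventually.of_forall fun w => ?_)
  show f (e.symm (z, pu.symm w)) = f ![z, w]
  congr 1
  funext r
  fin_cases r <;>
    simp [he, hpu, MeasurableEquiv.piFinSuccAbove, MeasurableEquiv.piUnique]

theorem integral_pi_three {E' : Type*} [MeasurableSpace E'] (μ : Measure E')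
    [IsProbabilityMeasure μ] {f : (Fin 3 → E') → ℝ} (hf : Measurable f) {B : ℝ}
    (hbdd : ∀ v, |f v| ≤ B) :
    ∫ v, f v ∂(Measure.pi fun _ : Fin 3 => μ)
      = ∫ z, ∫ w, ∫ w', f ![z, w, w'] ∂μ ∂μ ∂μ := by
  set e := MeasurableEquiv.piFinSuccAbove (fun _ : Fin 3 => E') 0 with he
  have h1 : ∫ v, f v ∂(Measure.pi fun _ : Fin 3 => μ)
      = ∫ p, f (e.symm p) ∂(μ.prod (Measure.pi fun _ : Fin 2 => μ)) := by
    rw [← (measurePreserving_piFinSuccAbove (fun _ : Fin 3 => μ) 0).integral_comp'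
      (g := fun p => f (e.symm p))]
    refine integral_congr_ae (Filter.Eventually.of_forall fun v => ?_)
    exact congrArg f (e.symm_apply_apply v).symm
  rw [h1]
  have hint : Integrable (fun p => f (e.symm p)) (μ.prod (Measure.pi fun _ : Fin 2 => μ)) := by
    refine (integrable_const B).mono' (hf.comp e.symm.measurable).aestronglyMeasurable ?_
    filter_upwards with p
    simpa [Real.norm_eq_abs] using hbdd _
  rw [integral_prod _ hint]
  refine integral_congr_ae (Filter.Eventually.of_forall fun z => ?_)
  show (∫ v, f (e.symm (z, v)) ∂(Measure.pi fun _ : Fin 2 => μ))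
      = ∫ w, ∫ w', f ![z, w, w'] ∂μ ∂μ
  rw [integral_pi_two μ (f := fun v => f (e.symm (z, v)))
    (show Measurable fun v : Fin 2 → E' => f (e.symm (z, v)) from
      hf.comp (e.symm.measurable.comp measurable_prodMk_left))
    (B := B) (fun v => hbdd _)]
  refine integral_congr_ae (Filter.Eventually.of_forall fun w => ?_)
  refine integral_congr_ae (Filter.Eventually.of_forall fun w' => ?_)
  show f (e.symm (z, ![w, w'])) = f ![z, w, w']
  congr 1
  funext r
  fin_cases r <;>
    first
      | rfl
      | simp [he, MeasurableEquiv.piFinSuccAbove]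



end AuxGeneric


variable {𝕏 𝕐 : Type*} [MeasurableSpace 𝕏] [MeasurableSpace 𝕐]
variable {H : Type*} [NormedAddCommGroup H] [InnerProductSpace ℝ H]

/-- `g_T(x) := ∫ ψ(T(x, x', y')) dμ(x', y')` where `μ = ν ⊗ κ`. -/
def gEmb (ν : Measure 𝕏) (κ : Kernel 𝕏 𝕐) (ψ : 𝕐 → H)
    (T : 𝕏 → 𝕏 → 𝕐 → 𝕐) (x : 𝕏) : H :=
  ∫ q, ψ (T x q.1 q.2) ∂(ν.compProd κ)

/-- Population CMMD loss `ℓ(T) := ∫ ‖ψ(y) − g_T(x)‖² dμ(x,y)` where `μ = ν ⊗ κ`. -/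
def cmmdLoss (ν : Measure 𝕏) (κ : Kernel 𝕏 𝕐) (ψ : 𝕐 → H)
    (T : 𝕏 → 𝕏 → 𝕐 → 𝕐) : ℝ :=
  ∫ q, ‖ψ q.2 - gEmb ν κ ψ T q.1‖ ^ 2 ∂(ν.compProd κ)

/-- The CMMD V-statistic on the first `n` data points `z 0, …, z (n−1)`,
with `k(y, y') := ⟪ψ y, ψ y'⟫`:
`ℓ_n^V(T) = −(2/n²) Σᵢⱼ k(Yᵢ, T(Xᵢ,Xⱼ,Yⱼ)) + (1/n³) Σᵢⱼₗ k(T(Xᵢ,Xⱼ,Yⱼ), T(Xᵢ,Xₗ,Yₗ))`. -/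
def vStat (ψ : 𝕐 → H) (T : 𝕏 → 𝕏 → 𝕐 → 𝕐) (n : ℕ) (z : ℕ → 𝕏 × 𝕐) : ℝ :=
  -(2 / (n : ℝ) ^ 2) *
      ∑ i ∈ Finset.range n, ∑ j ∈ Finset.range n,
        ⟪ψ (z i).2, ψ (T (z i).1 (z j).1 (z j).2)⟫
  + (1 / (n : ℝ) ^ 3) *
      ∑ i ∈ Finset.range n, ∑ j ∈ Finset.range n, ∑ l ∈ Finset.range n,
        ⟪ψ (T (z i).1 (z j).1 (z j).2), ψ (T (z i).1 (z l).1 (z l).2)⟫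

theorem cmmd_decomp
    (ν : Measure 𝕏) [IsProbabilityMeasure ν]
    (κ : Kernel 𝕏 𝕐) [IsMarkovKernel κ]
    [MeasurableSpace H] [BorelSpace H] [CompleteSpace H] [SecondCountableTopology H]
    (ψ : 𝕐 → H) (hψ : Measurable ψ) (C : ℝ) (hψ_bdd : ∀ y, ‖ψ y‖ ≤ C)
    (T : 𝕏 → 𝕏 → 𝕐 → 𝕐)
    (hT : Measurable fun q : (𝕏 × 𝕏) × 𝕐 => T q.1.1 q.1.2 q.2) :
    cmmdLoss ν κ ψ T + -(∫ z, ‖ψ z.2‖ ^ 2 ∂(ν.compProd κ))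
      = (∫ v, (-2 : ℝ) * ⟪ψ (v 0).2, ψ (T (v 0).1 (v 1).1 (v 1).2)⟫
            ∂(Measure.pi fun _ : Fin 2 => ν.compProd κ))
        + ∫ v, ⟪ψ (T (v 0).1 (v 1).1 (v 1).2), ψ (T (v 0).1 (v 2).1 (v 2).2)⟫
            ∂(Measure.pi fun _ : Fin 3 => ν.compProd κ) := by
  set μm : Measure (𝕏 × 𝕐) := ν.compProd κ with hμm
  haveI : IsProbabilityMeasure μm := by rw [hμm]; infer_instance
  set g : 𝕏 → H := gEmb ν κ ψ T with hg
  -- measurability of g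
  have hg_sm : StronglyMeasurable g := by
    have h : StronglyMeasurable (fun p : 𝕏 × (𝕏 × 𝕐) => ψ (T p.1 p.2.1 p.2.2)) :=
      (hψ.comp (hT.comp ((measurable_fst.prodMk
        (measurable_fst.comp measurable_snd)).prodMk
        (measurable_snd.comp measurable_snd)))).stronglyMeasurable
    exact h.integral_prod_right'
  have hg_bdd : ∀ x, ‖g x‖ ≤ C := by
    intro x
    refine le_trans (norm_integral_le_integral_norm _) ?_
    calc ∫ q, ‖ψ (T x q.1 q.2)‖ ∂μm ≤ ∫ _, C ∂μm := by
          refine integral_mono_of_nonneg (Filter.Eventually.of_forall fun q => norm_nonneg _)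
            (integrable_const C) (Filter.Eventually.of_forall fun q => hψ_bdd _)
      _ = C := by simp
  -- section integrability
  have hu_meas : ∀ z : 𝕏 × 𝕐, Measurable (fun w : 𝕏 × 𝕐 => ψ (T z.1 w.1 w.2)) := by
    intro z
    exact hψ.comp (hT.comp ((measurable_const.prodMk measurable_fst).prodMk measurable_snd))
  have hu_int : ∀ z : 𝕏 × 𝕐, Integrable (fun w : 𝕏 × 𝕐 => ψ (T z.1 w.1 w.2)) μm := by
    intro z
    refine (integrable_const C).mono' (hu_meas z).stronglyMeasurable.aestronglyMeasurable ?_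
    filter_upwards with w
    exact hψ_bdd _
  have hgval : ∀ z : 𝕏 × 𝕐, (∫ w, ψ (T z.1 w.1 w.2) ∂μm) = g z.1 := fun z => rfl
  have hinner1 : ∀ z : 𝕏 × 𝕐, ∫ w, ⟪ψ z.2, ψ (T z.1 w.1 w.2)⟫ ∂μm = ⟪ψ z.2, g z.1⟫ := by
    intro z
    rw [integral_inner (hu_int z) (ψ z.2), hgval z]
  have hinner2 : ∀ z w : 𝕏 × 𝕐,
      ∫ w', ⟪ψ (T z.1 w.1 w.2), ψ (T z.1 w'.1 w'.2)⟫ ∂μm = ⟪ψ (T z.1 w.1 w.2), g z.1⟫ := by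
    intro z w
    rw [integral_inner (hu_int z) _, hgval z]
  have hinner3 : ∀ z : 𝕏 × 𝕐, ∫ w, ⟪ψ (T z.1 w.1 w.2), g z.1⟫ ∂μm = ‖g z.1‖ ^ 2 := by
    intro z
    have hcomm : ∀ w : 𝕏 × 𝕐, ⟪ψ (T z.1 w.1 w.2), g z.1⟫ = ⟪g z.1, ψ (T z.1 w.1 w.2)⟫ :=
      fun w => real_inner_comm _ _
    rw [integral_congr_ae (Filter.Eventually.of_forall hcomm),
      integral_inner (hu_int z) (g z.1), hgval z, real_inner_self_eq_norm_sq]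
  -- f2, f3
  set f2 : (Fin 2 → 𝕏 × 𝕐) → ℝ :=
    fun v => (-2 : ℝ) * ⟪ψ (v 0).2, ψ (T (v 0).1 (v 1).1 (v 1).2)⟫ with hf2
  set f3 : (Fin 3 → 𝕏 × 𝕐) → ℝ :=
    fun v => ⟪ψ (T (v 0).1 (v 1).1 (v 1).2), ψ (T (v 0).1 (v 2).1 (v 2).2)⟫ with hf3
  have hTv_meas : ∀ (k : ℕ) (a b : Fin k), Measurable
      (fun v : Fin k → 𝕏 × 𝕐 => ψ (T (v a).1 (v b).1 (v b).2)) := by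
    intro k a b
    exact hψ.comp (hT.comp ((((measurable_pi_apply a).fst).prodMk
      ((measurable_pi_apply b).fst)).prodMk ((measurable_pi_apply b).snd)))
  have hf2m : Measurable f2 := by
    refine Measurable.const_mul ?_ _
    exact Measurable.inner (hψ.comp ((measurable_pi_apply 0).snd)) (hTv_meas 2 0 1)
  have hf3m : Measurable f3 := Measurable.inner (hTv_meas 3 0 1) (hTv_meas 3 0 2)
  have hinn_bdd : ∀ (x y : H), ‖x‖ ≤ C → ‖y‖ ≤ C → |⟪x, y⟫| ≤ C ^ 2 := by
    intro x y hx hy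
    calc |⟪x, y⟫| ≤ ‖x‖ * ‖y‖ := abs_real_inner_le_norm _ _
      _ ≤ C * C := mul_le_mul hx hy (norm_nonneg _) (le_trans (norm_nonneg _) hx)
      _ = C ^ 2 := by ring
  have hf2b : ∀ v, |f2 v| ≤ 2 * C ^ 2 := by
    intro v
    simp only [hf2]
    rw [abs_mul, abs_neg, abs_two]
    exact mul_le_mul_of_nonneg_left (hinn_bdd _ _ (hψ_bdd _) (hψ_bdd _)) (by norm_num)
  have hf3b : ∀ v, |f3 v| ≤ C ^ 2 := fun v => hinn_bdd _ _ (hψ_bdd _) (hψ_bdd _)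
  -- θ2
  have hθ2 : ∫ v, f2 v ∂(Measure.pi fun _ : Fin 2 => μm)
      = ∫ z, (-2 : ℝ) * ⟪ψ z.2, g z.1⟫ ∂μm := by
    rw [integral_pi_two μm hf2m hf2b]
    refine integral_congr_ae (Filter.Eventually.of_forall fun z => ?_)
    show (∫ w, f2 ![z, w] ∂μm) = (-2 : ℝ) * ⟪ψ z.2, g z.1⟫
    have hev : ∀ w : 𝕏 × 𝕐, f2 ![z, w] = (-2 : ℝ) * ⟪ψ z.2, ψ (T z.1 w.1 w.2)⟫ := by
      intro w
      rw [hf2]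
      simp
    rw [integral_congr_ae (Filter.Eventually.of_forall hev), integral_const_mul, hinner1 z]
  -- θ3
  have hθ3 : ∫ v, f3 v ∂(Measure.pi fun _ : Fin 3 => μm)
      = ∫ z, ‖g z.1‖ ^ 2 ∂μm := by
    rw [integral_pi_three μm hf3m hf3b]
    refine integral_congr_ae (Filter.Eventually.of_forall fun z => ?_)
    show (∫ w, ∫ w', f3 ![z, w, w'] ∂μm ∂μm) = ‖g z.1‖ ^ 2
    have hev : ∀ w : 𝕏 × 𝕐, (∫ w', f3 ![z, w, w'] ∂μm) = ⟪ψ (T z.1 w.1 w.2), g z.1⟫ := by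
      intro w
      have hev' : ∀ w' : 𝕏 × 𝕐, f3 ![z, w, w']
          = ⟪ψ (T z.1 w.1 w.2), ψ (T z.1 w'.1 w'.2)⟫ := by
        intro w'
        rw [hf3]
        simp
      rw [integral_congr_ae (Filter.Eventually.of_forall hev'), hinner2 z w]
    rw [integral_congr_ae (Filter.Eventually.of_forall hev), hinner3 z]
  -- integrability of the three pieces
  have hi1 : Integrable (fun z : 𝕏 × 𝕐 => ‖ψ z.2‖ ^ 2) μm := by
    refine (integrable_const (C ^ 2)).mono'
      (((hψ.comp measurable_snd).norm.pow_const 2).aestronglyMeasurable) ?_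
    filter_upwards with z
    rw [Real.norm_eq_abs, abs_pow, abs_norm]
    exact pow_le_pow_left₀ (norm_nonneg _) (hψ_bdd _) 2
  have hi2 : Integrable (fun z : 𝕏 × 𝕐 => (-2 : ℝ) * ⟪ψ z.2, g z.1⟫) μm := by
    refine (integrable_const (2 * C ^ 2)).mono'
      ((Measurable.inner (hψ.comp measurable_snd)
        (hg_sm.measurable.comp measurable_fst)).const_mul _).aestronglyMeasurable ?_
    filter_upwards with z
    rw [Real.norm_eq_abs, abs_mul, abs_neg, abs_two]
    exact mul_le_mul_of_nonneg_left (hinn_bdd _ _ (hψ_bdd _) (hg_bdd _)) (by norm_num)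
  have hi3 : Integrable (fun z : 𝕏 × 𝕐 => ‖g z.1‖ ^ 2) μm := by
    refine (integrable_const (C ^ 2)).mono'
      (((hg_sm.measurable.comp measurable_fst).norm.pow_const 2).aestronglyMeasurable) ?_
    filter_upwards with z
    rw [Real.norm_eq_abs, abs_pow, abs_norm]
    exact pow_le_pow_left₀ (norm_nonneg _) (hg_bdd _) 2
  -- expansion of the loss
  have hexp : cmmdLoss ν κ ψ T
      = ∫ z, (‖ψ z.2‖ ^ 2 + ((-2 : ℝ) * ⟪ψ z.2, g z.1⟫ + ‖g z.1‖ ^ 2)) ∂μm := by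
    rw [cmmdLoss]
    refine integral_congr_ae (Filter.Eventually.of_forall fun z => ?_)
    show ‖ψ z.2 - g z.1‖ ^ 2 = _
    rw [norm_sub_sq_real]
    ring
  have hi23 : Integrable (fun z : 𝕏 × 𝕐 => (-2 : ℝ) * ⟪ψ z.2, g z.1⟫ + ‖g z.1‖ ^ 2) μm :=
    hi2.add hi3
  rw [hexp, integral_add hi1 hi23, integral_add hi2 hi3, hθ2, hθ3]
  ring


/-- **√n-concentration of the CMMD V-statistic.** For i.i.d. data with law
`μ = ν ⊗ κ` and bounded `ψ`, with `c := −∫ ‖ψ(y)‖² dμ`, for every `ε > 0` there is `M > 0`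
such that for all `n ≥ 1`,
`ℙ(|ℓ_n^V(T) − ℓ(T) − c| > M n^{−1/2}) ≤ ε`. -/
theorem vStat_sqrt_n_concentration
    [StandardBorelSpace 𝕏] [StandardBorelSpace 𝕐]
    (ν : Measure 𝕏) [IsProbabilityMeasure ν]
    (κ : Kernel 𝕏 𝕐) [IsMarkovKernel κ]
    [MeasurableSpace H] [BorelSpace H] [CompleteSpace H] [SecondCountableTopology H]
    (ψ : 𝕐 → H) (hψ : Measurable ψ) (C : ℝ) (hψ_bdd : ∀ y, ‖ψ y‖ ≤ C)
    (T : 𝕏 → 𝕏 → 𝕐 → 𝕐)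
    (hT : Measurable fun q : (𝕏 × 𝕏) × 𝕐 => T q.1.1 q.1.2 q.2)
    {Ω : Type*} [MeasurableSpace Ω] (P : Measure Ω) [IsProbabilityMeasure P]
    (Z : ℕ → Ω → 𝕏 × 𝕐) (hZ_meas : ∀ i, Measurable (Z i))
    (hZ_indep : iIndepFun Z P)
    (hZ_law : ∀ i, P.map (Z i) = ν.compProd κ) :
    ∀ ε > (0 : ℝ), ∃ M > (0 : ℝ), ∀ n : ℕ, 1 ≤ n →
      P {ω | M / Real.sqrt n <
          |vStat ψ T n (fun i => Z i ω) -
            (cmmdLoss ν κ ψ T + -(∫ z, ‖ψ z.2‖ ^ 2 ∂(ν.compProd κ)))|}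
        ≤ ENNReal.ofReal ε := by
  intro ε hε
  classical
  set μm : Measure (𝕏 × 𝕐) := ν.compProd κ with hμm
  haveI : IsProbabilityMeasure μm := by rw [hμm]; infer_instance
  have hlaw' : ∀ i, P.map (Z i) = μm := fun i => by rw [hμm]; exact hZ_law i
  have hne : Nonempty (𝕏 × 𝕐) := by
    by_contra h
    rw [not_nonempty_iff] at h
    have h1 := measure_univ (μ := μm)
    rw [Set.univ_eq_empty_iff.mpr h] at h1
    simp at h1
  have hC0 : (0 : ℝ) ≤ C :=
    le_trans (norm_nonneg _) (hψ_bdd (Classical.arbitrary (𝕏 × 𝕐)).2)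
  set f2 : (Fin 2 → 𝕏 × 𝕐) → ℝ :=
    fun v => (-2 : ℝ) * ⟪ψ (v 0).2, ψ (T (v 0).1 (v 1).1 (v 1).2)⟫ with hf2
  set f3 : (Fin 3 → 𝕏 × 𝕐) → ℝ :=
    fun v => ⟪ψ (T (v 0).1 (v 1).1 (v 1).2), ψ (T (v 0).1 (v 2).1 (v 2).2)⟫ with hf3
  have hTv_meas : ∀ (k : ℕ) (a b : Fin k), Measurable
      (fun v : Fin k → 𝕏 × 𝕐 => ψ (T (v a).1 (v b).1 (v b).2)) := by
    intro k a b
    exact hψ.comp (hT.comp ((((measurable_pi_apply a).fst).prodMk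
      ((measurable_pi_apply b).fst)).prodMk ((measurable_pi_apply b).snd)))
  have hf2m : Measurable f2 := by
    refine Measurable.const_mul ?_ _
    exact Measurable.inner (hψ.comp ((measurable_pi_apply 0).snd)) (hTv_meas 2 0 1)
  have hf3m : Measurable f3 := Measurable.inner (hTv_meas 3 0 1) (hTv_meas 3 0 2)
  have hinn_bdd : ∀ (x y : H), ‖x‖ ≤ C → ‖y‖ ≤ C → |⟪x, y⟫| ≤ C ^ 2 := by
    intro x y hx hy
    calc |⟪x, y⟫| ≤ ‖x‖ * ‖y‖ := abs_real_inner_le_norm _ _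
      _ ≤ C * C := mul_le_mul hx hy (norm_nonneg _) (le_trans (norm_nonneg _) hx)
      _ = C ^ 2 := by ring
  have hf2b : ∀ v, |f2 v| ≤ 2 * C ^ 2 := by
    intro v
    simp only [hf2]
    rw [abs_mul, abs_neg, abs_two]
    exact mul_le_mul_of_nonneg_left (hinn_bdd _ _ (hψ_bdd _) (hψ_bdd _)) (by norm_num)
  have hf3b : ∀ v, |f3 v| ≤ C ^ 2 := fun v => hinn_bdd _ _ (hψ_bdd _) (hψ_bdd _)
  set θ2 : ℝ := ∫ v, f2 v ∂(Measure.pi fun _ : Fin 2 => μm) with hθ2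
  set θ3 : ℝ := ∫ v, f3 v ∂(Measure.pi fun _ : Fin 3 => μm) with hθ3
  have hdecomp : cmmdLoss ν κ ψ T + -(∫ z, ‖ψ z.2‖ ^ 2 ∂μm) = θ2 + θ3 := by
    rw [hθ2, hθ3, hf2, hf3, hμm]
    exact cmmd_decomp ν κ ψ hψ C hψ_bdd T hT
  -- the constant M
  set M : ℝ := Real.sqrt ((1600 * C ^ 4 + 1) / ε) + 1 with hM
  have hM1 : (1 : ℝ) ≤ M := by
    rw [hM]
    linarith [Real.sqrt_nonneg ((1600 * C ^ 4 + 1) / ε)]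
  have hM0 : (0 : ℝ) < M := lt_of_lt_of_le one_pos hM1
  have hMε : 1600 * C ^ 4 + 1 ≤ ε * M ^ 2 := by
    have h1 : Real.sqrt ((1600 * C ^ 4 + 1) / ε) ≤ M := by
      rw [hM]; linarith
    have h3 := Real.sq_sqrt (show (0 : ℝ) ≤ (1600 * C ^ 4 + 1) / ε by positivity)
    have h2 : (1600 * C ^ 4 + 1) / ε ≤ M ^ 2 := by
      nlinarith [Real.sqrt_nonneg ((1600 * C ^ 4 + 1) / ε)]
    calc 1600 * C ^ 4 + 1 = ((1600 * C ^ 4 + 1) / ε) * ε := by field_simp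
      _ ≤ M ^ 2 * ε := mul_le_mul_of_nonneg_right h2 hε.le
      _ = ε * M ^ 2 := by ring
  refine ⟨M, hM0, ?_⟩
  intro n hn
  have hn0 : (0 : ℝ) < n := by exact_mod_cast Nat.lt_of_lt_of_le Nat.zero_lt_one hn
  have hsqn : (0 : ℝ) < Real.sqrt n := Real.sqrt_pos.mpr hn0
  have hsq2 : (Real.sqrt n) ^ 2 = (n : ℝ) := Real.sq_sqrt hn0.le
  set a2 : ℝ := M * (n : ℝ) ^ 2 / (2 * Real.sqrt n) with ha2
  set a3 : ℝ := M * (n : ℝ) ^ 3 / (2 * Real.sqrt n) with ha3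
  have ha2pos : 0 < a2 := by rw [ha2]; positivity
  have ha3pos : 0 < a3 := by rw [ha3]; positivity
  have hcheb2 := vstat_chebyshev (μ := μm) hZ_meas hZ_indep hlaw' hf2m hf2b n ha2pos
  have hcheb3 := vstat_chebyshev (μ := μm) hZ_meas hZ_indep hlaw' hf3m hf3b n ha3pos
  rw [← hθ2] at hcheb2
  rw [← hθ3] at hcheb3
  -- the key algebraic identity
  have hkey : ∀ ω, vStat ψ T n (fun i => Z i ω) - (θ2 + θ3)
      = (1 / (n : ℝ) ^ 2) * (∑ t ∈ Fintype.piFinset (fun _ : Fin 2 => Finset.range n),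
          (f2 (fun r => Z (t r) ω) - θ2))
        + (1 / (n : ℝ) ^ 3) * (∑ t ∈ Fintype.piFinset (fun _ : Fin 3 => Finset.range n),
          (f3 (fun r => Z (t r) ω) - θ3)) := by
    intro ω
    have hsum2 : ∑ t ∈ Fintype.piFinset (fun _ : Fin 2 => Finset.range n),
        f2 (fun r => Z (t r) ω)
        = (-2 : ℝ) * ∑ i ∈ Finset.range n, ∑ j ∈ Finset.range n,
            ⟪ψ ((Z i ω).2), ψ (T (Z i ω).1 (Z j ω).1 (Z j ω).2)⟫ := by
      rw [sum_piFinset_two (Finset.range n) (fun t => f2 (fun r => Z (t r) ω)),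
        Finset.mul_sum]
      refine Finset.sum_congr rfl fun i _ => ?_
      rw [Finset.mul_sum]
      refine Finset.sum_congr rfl fun j _ => ?_
      have hv : (fun r => Z (![i, j] r) ω) = ![Z i ω, Z j ω] := by
        funext r; fin_cases r <;> rfl
      rw [hv]
      simp [hf2]
    have hsum3 : ∑ t ∈ Fintype.piFinset (fun _ : Fin 3 => Finset.range n),
        f3 (fun r => Z (t r) ω)
        = ∑ i ∈ Finset.range n, ∑ j ∈ Finset.range n, ∑ l ∈ Finset.range n,
            ⟪ψ (T (Z i ω).1 (Z j ω).1 (Z j ω).2), ψ (T (Z i ω).1 (Z l ω).1 (Z l ω).2)⟫ := by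
      rw [sum_piFinset_three (Finset.range n) (fun t => f3 (fun r => Z (t r) ω))]
      refine Finset.sum_congr rfl fun i _ => ?_
      refine Finset.sum_congr rfl fun j _ => ?_
      refine Finset.sum_congr rfl fun l _ => ?_
      have hv : (fun r => Z (![i, j, l] r) ω) = ![Z i ω, Z j ω, Z l ω] := by
        funext r; fin_cases r <;> rfl
      rw [hv]
      simp [hf3]
    have hcard2 : (((Fintype.piFinset (fun _ : Fin 2 => Finset.range n)).card : ℕ) : ℝ)
        = (n : ℝ) ^ 2 := by
      rw [Fintype.card_piFinset]
      simp [Finset.card_range]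
    have hcard3 : (((Fintype.piFinset (fun _ : Fin 3 => Finset.range n)).card : ℕ) : ℝ)
        = (n : ℝ) ^ 3 := by
      rw [Fintype.card_piFinset]
      simp [Finset.card_range]
    rw [Finset.sum_sub_distrib, Finset.sum_sub_distrib, hsum2, hsum3,
      Finset.sum_const, Finset.sum_const, nsmul_eq_mul, nsmul_eq_mul, hcard2, hcard3]
    simp only [vStat]
    have hn2 : (n : ℝ) ^ 2 ≠ 0 := by positivity
    have hn3 : (n : ℝ) ^ 3 ≠ 0 := by positivity
    field_simp
    ring
  -- event inclusion
  have hsubset : {ω | M / Real.sqrt n <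
        |vStat ψ T n (fun i => Z i ω) - (cmmdLoss ν κ ψ T + -(∫ z, ‖ψ z.2‖ ^ 2 ∂μm))|}
      ⊆ {ω | a2 < |∑ t ∈ Fintype.piFinset (fun _ : Fin 2 => Finset.range n),
            (f2 (fun r => Z (t r) ω) - θ2)|}
        ∪ {ω | a3 < |∑ t ∈ Fintype.piFinset (fun _ : Fin 3 => Finset.range n),
            (f3 (fun r => Z (t r) ω) - θ3)|} := by
    intro ω hω
    simp only [Set.mem_setOf_eq] at hω
    rw [hdecomp] at hω
    by_contra hcon
    simp only [Set.mem_union, Set.mem_setOf_eq, not_or, not_lt] at hcon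
    obtain ⟨h2, h3⟩ := hcon
    have harith : 1 / (n : ℝ) ^ 2 * a2 + 1 / (n : ℝ) ^ 3 * a3 = M / Real.sqrt n := by
      rw [ha2, ha3]
      field_simp
      ring
    have hab : |vStat ψ T n (fun i => Z i ω) - (θ2 + θ3)| ≤ M / Real.sqrt n := by
      rw [hkey ω]
      refine le_trans (abs_add_le _ _) ?_
      rw [abs_mul, abs_mul, abs_of_pos (show (0:ℝ) < 1 / (n : ℝ) ^ 2 by positivity),
        abs_of_pos (show (0:ℝ) < 1 / (n : ℝ) ^ 3 by positivity), ← harith]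
      exact add_le_add (mul_le_mul_of_nonneg_left h2 (by positivity))
        (mul_le_mul_of_nonneg_left h3 (by positivity))
    exact absurd hω (not_lt.mpr hab)
  refine le_trans (measure_mono hsubset) (le_trans (measure_union_le _ _) ?_)
  refine le_trans (add_le_add hcheb2 hcheb3) ?_
  rw [← ENNReal.ofReal_add (by positivity) (by positivity)]
  refine ENNReal.ofReal_le_ofReal ?_
  have ha2sq : a2 ^ 2 = M ^ 2 * (n : ℝ) ^ 3 / 4 := by
    rw [ha2, div_pow, mul_pow, mul_pow, hsq2]
    field_simp [hn0.ne']
    ring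
  have ha3sq : a3 ^ 2 = M ^ 2 * (n : ℝ) ^ 5 / 4 := by
    rw [ha3, div_pow, mul_pow, mul_pow, hsq2]
    field_simp [hn0.ne']
    ring
  have hfinal : (1024 * C ^ 4) / M ^ 2 + (576 * C ^ 4) / M ^ 2 ≤ ε := by
    rw [← add_div, div_le_iff₀ (show (0:ℝ) < M ^ 2 by positivity)]
    nlinarith
  refine le_trans (le_of_eq ?_) hfinal
  rw [ha2sq, ha3sq]
  push_cast
  norm_num
  field_simp [hn0.ne', (show M ≠ 0 from hM0.ne')]
  ring

end
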